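/- With S₂(t₁,t₂) = s₀t₂² + s₁t₁t₂ + s₂t₁², where s₀ = a₂c₁ − a₁c₂, s₁ = −(a₂c₁' + a₂'c₁ − a₁c₂' − a₁'c₂), s₂ = a₂'c₁' − a₁'c₂', the polynomial identity ψ₆ = φ₆ + S₂(w(y), w'(y)) holds in the polynomial ring over ℚ in the fourteen coefficients and y₁,y₂,y₃. -/
import Mathlib


open MvPolynomial

noncomputable section

/-- The polynomial ring ℚ[a₁,a₂,b₁,b₂,b₃,c₁,c₂,a₁',a₂',b₁',b₂',b₃',c₁',c₂',y₁,y₂,y₃]. -/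
abbrev R17 : Type := MvPolynomial (Fin 17) ℚ

def a1 : R17 := X 0
def a2 : R17 := X 1
def b1 : R17 := X 2
def b2 : R17 := X 3
def b3 : R17 := X 4
def c1 : R17 := X 5
def c2 : R17 := X 6
def a1' : R17 := X 7
def a2' : R17 := X 8
def b1' : R17 := X 9
def b2' : R17 := X 10
def b3' : R17 := X 11
def c1' : R17 := X 12
def c2' : R17 := X 13
def y1 : R17 := X 14
def y2 : R17 := X 15
def y3 : R17 := X 16

/-- w evaluated at y. -/
def w : R17 :=
  y3^2*(a1*y1 + a2*y2) + y3*(b1*y1^2 + b2*y1*y2 + b3*y2^2) + c1*y1^2*y2 + c2*y1*y2^2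
/-- w' evaluated at y. -/
def w' : R17 :=
  y3^2*(a1'*y1 + a2'*y2) + y3*(b1'*y1^2 + b2'*y1*y2 + b3'*y2^2) + c1'*y1^2*y2 + c2'*y1*y2^2

def A1 : R17 := a1*w' - a1'*w
def A2 : R17 := a2*w' - a2'*w
def B1 : R17 := b1*w' - b1'*w
def B2 : R17 := b2*w' - b2'*w
def B3 : R17 := b3*w' - b3'*w
def C1 : R17 := c1*w' - c1'*w
def C2 : R17 := c2*w' - c2'*w

def r1' : R17 := B1*A2^2 - B2*A1*A2 + B3*A1^2
def r3' : R17 := A2*C1 - A1*C2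
def r1 : R17 := A2*r1'
def r2 : R17 := -(A1*r1')
def r3 : R17 := A1*A2*r3'
def γ4 : R17 := y1*A1 + y2*A2
def κ : R17 := a1*b1' - a1'*b1

/-- C₅, in terms of the three exact quotients q₁ = (B₁+κy₁y₃²)/y₂,
q₂ = (A₁−κy₁²y₃)/y₂, q₃ = (A₂y₃+B₃y₂)/y₁. -/
def C5 (q1 q2 q3 : R17) : R17 := A2*q1 + q2*q3 + κ*B3*y1*y3
def φ6 (q1 q2 q3 : R17) : R17 := A1*C2 + y3 * C5 q1 q2 q3
def ψ6 (q1 q2 q3 : R17) : R17 := A2*C1 + y3 * C5 q1 q2 q3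

def s0 : R17 := a2*c1 - a1*c2
def s1 : R17 := -(a2*c1' + a2'*c1 - a1*c2' - a1'*c2)
def s2 : R17 := a2'*c1' - a1'*c2'

/-- S₂(t₁,t₂) = s₀t₂² + s₁t₁t₂ + s₂t₁². -/
def S2 (t t' : R17) : R17 := s0*t'^2 + s1*t*t' + s2*t^2

/-- The identity ψ₆ = φ₆ + S₂(w,w'). -/
theorem stmt7 (q1 q2 q3 : R17)
    (h1 : y2 * q1 = B1 + κ*y1*y3^2)
    (h2 : y2 * q2 = A1 - κ*y1^2*y3)
    (h3 : y1 * q3 = A2*y3 + B3*y2) :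
    ψ6 q1 q2 q3 = φ6 q1 q2 q3 + S2 w w' := by
  simp only [ψ6, φ6, S2, A1, A2, C1, C2, s0, s1, s2]
  ring
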